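/- The map c ↦ c_{⟨d⟩} is (weakly) increasing in c, where for c with Macaulay expansion c = Σ_{i=1}^d binom(i + ε_i, i) in base d one defines c_{⟨d⟩} := Σ_{i=1}^d binom(i + ε_i - 1, i). -/

import Mathlib

/-- The term `binom(i + e, i)` of a Macaulay expansion, with the convention that
it vanishes when `i + e < i` (e.g. `binom(i-1, i) = 0` for `e = -1`). -/
def macaulayTerm (i : ℕ) (e : ℤ) : ℕ := ((i : ℤ) + e).toNat.choose i

/-- `ε : Fin d → ℤ`, where `ε i` stands for `ε_{i+1}`, is the Macaulay expansion of `c`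
in base `d`. -/
def IsMacaulayExpansion (d c : ℕ) (ε : Fin d → ℤ) : Prop :=
  Monotone ε ∧ (∀ i, -1 ≤ ε i) ∧ c = ∑ i : Fin d, macaulayTerm (i.1 + 1) (ε i)

/-- Given the Macaulay expansion `c = ∑ binom(i + ε_i, i)` in base `d`,
`c_{⟨d⟩} = ∑ binom(i + ε_i - 1, i)`. -/
def macaulayLower (d : ℕ) (ε : Fin d → ℤ) : ℕ :=
  ∑ i : Fin d, macaulayTerm (i.1 + 1) (ε i - 1)

lemma macaulayTerm_mono (i : ℕ) {e e' : ℤ} (h : e ≤ e') :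
    macaulayTerm i e ≤ macaulayTerm i e' :=
  Nat.choose_le_choose i (Int.toNat_le_toNat (by omega))

lemma macaulayTerm_eq (i : ℕ) (e : ℤ) :
    macaulayTerm i e = ((i : ℤ) + e).toNat.choose i := rfl

/-- hockey stick in ℕ -/
lemma sum_range_choose_shift (d m : ℕ) :
    ∑ i ∈ Finset.range d, (i + 1 + m).choose (i + 1) = (d + m + 1).choose (m + 1) - 1 := by
  induction d with
  | zero => simp
  | succ d ih =>
    rw [Finset.sum_range_succ, ih]
    have e1 : d + 1 + m = d + m + 1 := by omega
    rw [e1]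
    have h1 : (d + m + 1).choose (d + 1) = (d + m + 1).choose m := by
      rw [show d + m + 1 = (d + 1) + m from by omega, Nat.choose_symm_add]
    have h2 : (d + m + 1 + 1).choose (m + 1)
        = (d + m + 1).choose m + (d + m + 1).choose (m + 1) :=
      Nat.choose_succ_succ (d + m + 1) m
    have h3 : 1 ≤ (d + m + 1).choose (m + 1) := Nat.choose_pos (by omega)
    omega

/-- sum of a constant-exponent row of Macaulay terms -/
lemma sum_macaulayTerm_const (d : ℕ) (k : ℤ) (hk : -2 ≤ k) :
    ∑ i : Fin d, macaulayTerm (i.1 + 1) k = ((d : ℤ) + k + 1).toNat.choose d - 1 := by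
  rcases lt_or_ge k 0 with hneg | hpos
  · have hL : ∀ i : Fin d, macaulayTerm (i.1 + 1) k = 0 := by
      intro i
      exact Nat.choose_eq_zero_of_lt (by omega)
    rw [Finset.sum_congr rfl (fun i _ => hL i), Finset.sum_const, smul_zero]
    have ht : ((d : ℤ) + k + 1).toNat ≤ d := by omega
    rcases eq_or_lt_of_le ht with he | hlt
    · rw [he, Nat.choose_self]
      rfl
    · rw [Nat.choose_eq_zero_of_lt hlt]
      rfl

  · obtain ⟨m, rfl⟩ := Int.eq_ofNat_of_zero_le hpos
    have hterm : ∀ i : Fin d, macaulayTerm (i.1 + 1) (m : ℤ)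
        = (i.1 + 1 + m).choose (i.1 + 1) := by
      intro i
      have ht2 : (((i.1 + 1 : ℕ) : ℤ) + (m : ℤ)).toNat = i.1 + 1 + m := by omega
      rw [macaulayTerm_eq, ht2]
    have ht : ((d : ℤ) + m + 1).toNat = d + m + 1 := by omega
    rw [ht, Finset.sum_congr rfl (fun i _ => hterm i),
      Fin.sum_univ_eq_sum_range (fun i => (i + 1 + m).choose (i + 1)) d,
      sum_range_choose_shift]
    congr 1
    rw [show d + m + 1 = d + (m + 1) from by omega, Nat.choose_symm_add]

lemma sum_macaulayTerm_le {d : ℕ} {ε : Fin d → ℤ} {k : ℤ} (hk : -2 ≤ k)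
    (hε : ∀ i, ε i ≤ k) :
    ∑ i : Fin d, macaulayTerm (i.1 + 1) (ε i) ≤ ((d : ℤ) + k + 1).toNat.choose d - 1 := by
  rw [← sum_macaulayTerm_const d k hk]
  exact Finset.sum_le_sum fun i _ => macaulayTerm_mono _ (hε i)

lemma key : ∀ (d : ℕ) (ε ε' : Fin d → ℤ), Monotone ε → (∀ i, -1 ≤ ε i) →
    Monotone ε' → (∀ i, -1 ≤ ε' i) →
    (∑ i : Fin d, macaulayTerm (i.1 + 1) (ε i)) ≤ (∑ i : Fin d, macaulayTerm (i.1 + 1) (ε' i)) →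
    (∑ i : Fin d, macaulayTerm (i.1 + 1) (ε i - 1)) ≤
      ∑ i : Fin d, macaulayTerm (i.1 + 1) (ε' i - 1) := by
  intro d
  induction d with
  | zero => intro ε ε' _ _ _ _ _; simp
  | succ d ih =>
    intro ε ε' hm h1 hm' h1' hcc
    rcases lt_trichotomy (ε (Fin.last d)) (ε' (Fin.last d)) with hk | hk | hk
    · -- top of ε is smaller
      have hlast : macaulayTerm (d + 1) (ε' (Fin.last d) - 1) ≤
          ∑ i : Fin (d + 1), macaulayTerm (i.1 + 1) (ε' i - 1) := by
        simpa using Finset.single_le_sum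
          (f := fun i : Fin (d + 1) => macaulayTerm (i.1 + 1) (ε' i - 1))
          (fun i _ => Nat.zero_le _) (Finset.mem_univ (Fin.last d))
      calc ∑ i : Fin (d + 1), macaulayTerm (i.1 + 1) (ε i - 1)
          ≤ (((d + 1 : ℕ) : ℤ) + (ε (Fin.last d) - 1) + 1).toNat.choose (d + 1) - 1 :=
            sum_macaulayTerm_le (by have := h1 (Fin.last d); omega)
              (fun i => by have := hm (Fin.le_last i); omega)
        _ ≤ (((d + 1 : ℕ) : ℤ) + (ε (Fin.last d) - 1) + 1).toNat.choose (d + 1) :=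
            Nat.sub_le _ _
        _ ≤ (((d + 1 : ℕ) : ℤ) + (ε' (Fin.last d) - 1)).toNat.choose (d + 1) :=
            Nat.choose_le_choose _ (Int.toNat_le_toNat (by omega))
        _ = macaulayTerm (d + 1) (ε' (Fin.last d) - 1) := rfl
        _ ≤ _ := hlast
    · -- equal tops: strip and use induction
      rw [Fin.sum_univ_castSucc, Fin.sum_univ_castSucc] at hcc ⊢
      simp only [Fin.coe_castSucc, Fin.val_last] at hcc ⊢
      rw [hk] at hcc ⊢
      have hsum := Nat.le_of_add_le_add_right hcc
      refine Nat.add_le_add_right ?_ _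
      exact ih (fun i => ε i.castSucc) (fun i => ε' i.castSucc)
        (fun a b hab => hm (Fin.castSucc_le_castSucc_iff.mpr hab))
        (fun i => h1 _)
        (fun a b hab => hm' (Fin.castSucc_le_castSucc_iff.mpr hab))
        (fun i => h1' _) hsum
    · -- top of ε bigger: contradiction with hcc
      exfalso
      have hc'le : ∑ i : Fin (d + 1), macaulayTerm (i.1 + 1) (ε' i) ≤
          (((d + 1 : ℕ) : ℤ) + ε' (Fin.last d) + 1).toNat.choose (d + 1) - 1 :=
        sum_macaulayTerm_le (by have := h1' (Fin.last d); omega)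
          (fun i => hm' (Fin.le_last i))
      have hpos : 0 < (((d + 1 : ℕ) : ℤ) + ε' (Fin.last d) + 1).toNat.choose (d + 1) :=
        Nat.choose_pos (by have := h1' (Fin.last d); omega)
      have hstep : (((d + 1 : ℕ) : ℤ) + ε' (Fin.last d) + 1).toNat.choose (d + 1) ≤
          (((d + 1 : ℕ) : ℤ) + ε (Fin.last d)).toNat.choose (d + 1) :=
        Nat.choose_le_choose _ (Int.toNat_le_toNat (by omega))
      have hcge : (((d + 1 : ℕ) : ℤ) + ε (Fin.last d)).toNat.choose (d + 1) ≤
          ∑ i : Fin (d + 1), macaulayTerm (i.1 + 1) (ε i) := by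
        exact Finset.single_le_sum
          (f := fun i : Fin (d + 1) => macaulayTerm (i.1 + 1) (ε i))
          (fun i _ => Nat.zero_le _) (Finset.mem_univ (Fin.last d))
      omega

/-- the map `c ↦ c_{⟨d⟩}` is weakly increasing in `c`. -/
theorem macaulayLower_mono (d c c' : ℕ) (ε ε' : Fin d → ℤ)
    (h : IsMacaulayExpansion d c ε) (h' : IsMacaulayExpansion d c' ε')
    (hcc : c ≤ c') :
    macaulayLower d ε ≤ macaulayLower d ε' := by
  obtain ⟨hm, h1, hc⟩ := h
  obtain ⟨hm', h1', hc'⟩ := h'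
  exact key d ε ε' hm h1 hm' h1' (by rw [← hc, ← hc']; exact hcc)
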